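/- If the functor S : C → Set is injective on arrows, then the canonical functor F^t : C → Asm(CM^t(C;S)) is an embedding: full, faithful, and injective on objects. -/

import Mathlib

open CategoryTheory

universe w v u

/-- An assembly over the total computability model `CM^t(C;S)`: a set `X`, a
type name (object of `C`) and a total realizability relation. -/
structure TotAsm {C : Type u} [Category.{v} C] (S : C ⥤ Type w) where
  X : Type w
  t : C
  R : S.obj t → X → Prop
  total : ∀ x, ∃ y, R y x

variable {C : Type u} [Category.{v} C] {S : C ⥤ Type w}

/-- Morphisms of assemblies over `CM^t(C;S)`: functions tracked by some element
`S₁(g)` of `S[a,b] = {S₁(g) : g : a ⟶ b}`. -/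
instance TotAsm.category : Category (TotAsm S) where
  Hom A B := {f : A.X → B.X // ∃ g : A.t ⟶ B.t, ∀ x y, A.R y x → B.R (S.map g y) (f x)}
  id A := ⟨id, ⟨𝟙 A.t, fun x y h => by simpa using h⟩⟩
  comp {A B D} f g := ⟨g.1 ∘ f.1, by
    obtain ⟨gf, hf⟩ := f.2
    obtain ⟨gg, hg⟩ := g.2
    exact ⟨gf ≫ gg, fun x y h => by
      simpa [FunctorToTypes.map_comp_apply] using hg _ _ (hf x y h)⟩⟩

/-- The canonical functor `F^t : C ⥤ Asm(CM^t(C;S))`, sending `a` to the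
assembly `(S₀(a), a, =)` with equality realizability, and `f` to `S₁(f)`. -/
def Ft (S : C ⥤ Type w) : C ⥤ TotAsm S where
  obj a := ⟨S.obj a, a, Eq, fun x => ⟨x, rfl⟩⟩
  map {a b} f := ⟨S.map f, ⟨f, fun x y h => by subst h; rfl⟩⟩
  map_id a := Subtype.ext (by funext x; simp; rfl)
  map_comp f g := Subtype.ext (by funext x; simp; rfl)


/-- if `S` is injective on arrows, then the canonical functor
`F^t : C ⥤ Asm(CM^t(C;S))` is an embedding: full, faithful and injective on
objects. -/
theorem Ft_embedding
    (hS : ∀ {a b : C} (f g : a ⟶ b), S.map f = S.map g → f = g) :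
    (Ft S).Full ∧ (Ft S).Faithful ∧ Function.Injective (Ft S).obj := by
  refine ⟨⟨fun {a b} φ => ?_⟩, ⟨fun {a b} f g h => ?_⟩, fun a b h => ?_⟩
  · obtain ⟨φ, g, hg⟩ := φ
    refine ⟨g, Subtype.ext ?_⟩
    funext x
    exact hg x x rfl
  · exact hS f g (by ext x; exact congrFun (congrArg Subtype.val h) x)
  · exact congrArg TotAsm.t h
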